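/- Let α', β' ∈ ℂ and let f : ℤ → ℂ be a sequence with f_n ≠ 0 for all n ∈ ℤ satisfying the third order nonlinear mapping f_{n-1} (f_n)^2 (f_{n+1})^2 f_{n+2} = α' f_n f_{n+1} + β' for all n ∈ ℤ. Then the quantity Ĩ_n = f_{n-1} f_n f_{n+1} + α' (1/f_{n-1} + 1/f_n + 1/f_{n+1}) + β'/(f_{n-1} f_n f_{n+1}) is a conserved quantity, i.e. Ĩ_n is independent of n. -/

import Mathlib

/-- For a nonvanishing solution `f` of the third order map
`f_{n-1} f_n^2 f_{n+1}^2 f_{n+2} = α' f_n f_{n+1} + β'`, the quantity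
`Ĩ_n = f_{n-1} f_n f_{n+1} + α'(1/f_{n-1} + 1/f_n + 1/f_{n+1}) + β'/(f_{n-1} f_n f_{n+1})`
is conserved. -/
theorem third_order_map_conserved_I (α' β' : ℂ) (f : ℤ → ℂ)
    (hne : ∀ n : ℤ, f n ≠ 0)
    (hf : ∀ n : ℤ, f (n - 1) * (f n) ^ 2 * (f (n + 1)) ^ 2 * f (n + 2)
      = α' * (f n * f (n + 1)) + β')
    (I : ℤ → ℂ)
    (hI : ∀ n : ℤ, I n = f (n - 1) * f n * f (n + 1)
      + α' * (1 / f (n - 1) + 1 / f n + 1 / f (n + 1))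
      + β' / (f (n - 1) * f n * f (n + 1))) :
    ∀ m n : ℤ, I m = I n := by
  have key : ∀ n : ℤ, I (n + 1) = I n := by
    intro n
    rw [hI, hI]
    have h := hf n
    have e1 : n + 1 - 1 = n := by ring
    have e2 : n + 1 + 1 = n + 2 := by ring
    rw [e1, e2]
    have h0 := hne (n - 1)
    have h1 := hne n
    have h2 := hne (n + 1)
    have h3 := hne (n + 2)
    field_simp
    linear_combination (f (n+2) - f (n-1)) * h
  have base : ∀ n : ℤ, I n = I 0 := by
    intro n
    induction n using Int.induction_on with
    | zero => rfl
    | succ k ih => rw [key k, ih]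
    | pred k ih =>
      have := key (-k - 1)
      rw [show -k - 1 + 1 = -(k:ℤ) by ring] at this
      rw [← this]
      exact ih
  intro m n
  rw [base m, base n]
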